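/- If G and H are graphs that both have clique number exactly two and are not both cliques (i.e., not both equal to K_2), then the mobile general position number of their join satisfies mob(G ∨ H) = 3. -/

import Mathlib

open SimpleGraph

/-- `S` is a general position set of `G`: for all `u, v ∈ S`, every shortest `u,v`-path
contains no vertex of `S` other than `u` and `v`. -/
def IsGPSet {V : Type*} (G : SimpleGraph V) (S : Set V) : Prop :=
  ∀ u ∈ S, ∀ v ∈ S, ∀ p : G.Walk u v, p.IsPath → p.length = G.dist u v →
    ∀ w ∈ p.support, w ∈ S → w = u ∨ w = v

/-- A legal move from the configuration `S` to the configuration `T`: a robot at `u ∈ S`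
moves to an adjacent unoccupied vertex `v ∉ S` so that the resulting configuration
`(S \ {u}) ∪ {v}` is again a general position set. -/
def LegalMove {V : Type*} (G : SimpleGraph V) (S T : Set V) : Prop :=
  IsGPSet G S ∧ ∃ u ∈ S, ∃ v, v ∉ S ∧ G.Adj u v ∧
    T = insert v (S \ {u}) ∧ IsGPSet G T

/-- `S` is a mobile general position set: there is a finite sequence of configurations
`S = S_0, S_1, …, S_k`, each obtained from the previous one by a legal move, whose union
is the whole vertex set. -/
def IsMobileGPSet {V : Type*} (G : SimpleGraph V) (S : Set V) : Prop :=
  IsGPSet G S ∧ ∃ (k : ℕ) (f : ℕ → Set V), f 0 = S ∧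
    (∀ i < k, LegalMove G (f i) (f (i + 1))) ∧
    (⋃ i ∈ Set.Iic k, f i) = Set.univ

/-- The mobile general position number of `G`: the maximum cardinality of a mobile
general position set. -/
noncomputable def mob {V : Type*} (G : SimpleGraph V) : ℕ :=
  sSup {n | ∃ S : Set V, IsMobileGPSet G S ∧ S.ncard = n}

/-- The join `G ∨ H` of two graphs: the disjoint union of `G` and `H` together with all
edges between `V(G)` and `V(H)`. -/
def joinGraph {α β : Type*} (G : SimpleGraph α) (H : SimpleGraph β) : SimpleGraph (α ⊕ β) :=
  SimpleGraph.fromRel (fun x y =>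
    (∃ a b, x = Sum.inl a ∧ y = Sum.inl b ∧ G.Adj a b) ∨
    (∃ a b, x = Sum.inr a ∧ y = Sum.inr b ∧ H.Adj a b) ∨
    (x.isLeft ∧ y.isRight))





def GPCond {V : Type*} (J : SimpleGraph V) (S : Set V) : Prop :=
  ∀ u ∈ S, ∀ v ∈ S, u ≠ v → ¬J.Adj u v → ∀ w ∈ S, J.Adj u w → J.Adj w v → False

section Adj
variable {α β : Type*} {G : SimpleGraph α} {H : SimpleGraph β}

lemma join_adj_ll {a b : α} :
    (joinGraph G H).Adj (Sum.inl a) (Sum.inl b) ↔ G.Adj a b := by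
  rw [joinGraph, fromRel_adj]
  constructor
  · rintro ⟨hne, h⟩
    simp at h
    rcases h with h | h
    · exact h
    · exact h.symm
  · intro h
    exact ⟨by simp [h.ne], Or.inl (Or.inl ⟨a, b, rfl, rfl, h⟩)⟩

lemma join_adj_rr {c d : β} :
    (joinGraph G H).Adj (Sum.inr c) (Sum.inr d) ↔ H.Adj c d := by
  rw [joinGraph, fromRel_adj]
  constructor
  · rintro ⟨hne, h⟩
    simp at h
    rcases h with h | h
    · exact h
    · exact h.symm
  · intro h
    exact ⟨by simp [h.ne], Or.inl (Or.inr (Or.inl ⟨c, d, rfl, rfl, h⟩))⟩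

lemma join_adj_lr {a : α} {c : β} : (joinGraph G H).Adj (Sum.inl a) (Sum.inr c) := by
  rw [joinGraph, fromRel_adj]
  exact ⟨by simp, Or.inl (Or.inr (Or.inr ⟨rfl, rfl⟩))⟩

lemma join_adj_rl {a : α} {c : β} : (joinGraph G H).Adj (Sum.inr c) (Sum.inl a) :=
  join_adj_lr.symm

end Adj



section GP
variable {V : Type*} {J : SimpleGraph V} {S : Set V}

lemma dist_two_of_mid {u v m : V} (hne : u ≠ v) (hnadj : ¬J.Adj u v)
    (h1 : J.Adj u m) (h2 : J.Adj m v) : J.dist u v = 2 := by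
  have hle : J.dist u v ≤ 2 := by
    simpa using J.dist_le (Walk.cons h1 (Walk.cons h2 Walk.nil))
  have h0 : 0 < J.dist u v :=
    Reachable.pos_dist_of_ne ⟨Walk.cons h1 (Walk.cons h2 Walk.nil)⟩ hne
  have h1' : J.dist u v ≠ 1 := fun hc => hnadj (dist_eq_one_iff_adj.mp hc)
  omega

lemma gpcond_of_isGPSet (h : IsGPSet J S) : GPCond J S := by
  intro u hu v hv huv hnadj w hw h1 h2
  have hwu : w ≠ u := fun e => by subst e; exact J.irrefl h1
  have hwv : w ≠ v := fun e => by subst e; exact J.irrefl h2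
  have hdist := dist_two_of_mid huv hnadj h1 h2
  have hpath : (Walk.cons h1 (Walk.cons h2 Walk.nil)).IsPath := by
    simp [Walk.cons_isPath_iff, huv, hwu.symm, hwv]
  have := h u hu v hv (Walk.cons h1 (Walk.cons h2 Walk.nil)) hpath
    (by simp [hdist]) w (by simp) hw
  rcases this with rfl | rfl
  · exact J.irrefl h1
  · exact J.irrefl h2

lemma walk_len1 {u v : V} (p : J.Walk u v) (h : p.length = 1) :
    ∃ (h1 : J.Adj u v), p = Walk.cons h1 Walk.nil := by
  cases p with
  | nil => simp at h
  | cons h1 q =>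
    cases q with
    | nil => exact ⟨h1, rfl⟩
    | cons h2 r => simp [Walk.length_cons] at h

lemma walk_len2 {u v : V} (p : J.Walk u v) (h : p.length = 2) :
    ∃ m, ∃ (h1 : J.Adj u m) (h2 : J.Adj m v), p = Walk.cons h1 (Walk.cons h2 Walk.nil) := by
  cases p with
  | nil => simp at h
  | cons h1 q =>
    cases q with
    | nil => simp at h
    | cons h2 r =>
      cases r with
      | nil => exact ⟨_, h1, h2, rfl⟩
      | cons h3 s => simp [Walk.length_cons] at h

end GP
section MV
variable {V : Type*} {x y z u v : V}

lemma mvA (h1 : u ≠ x) (h2 : u ≠ y) : ({x, y, v} : Set V) = insert v ({x, y, u} \ {u}) := by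
  ext w
  simp only [Set.mem_insert_iff, Set.mem_singleton_iff, Set.mem_diff]
  aesop

lemma mvB (h1 : u ≠ y) (h2 : u ≠ z) : ({v, y, z} : Set V) = insert v ({u, y, z} \ {u}) := by
  ext w
  simp only [Set.mem_insert_iff, Set.mem_singleton_iff, Set.mem_diff]
  aesop

lemma mvC (h1 : u ≠ y) (h2 : u ≠ z) : ({y, z, v} : Set V) = insert v ({u, y, z} \ {u}) := by
  ext w
  simp only [Set.mem_insert_iff, Set.mem_singleton_iff, Set.mem_diff]
  aesop

lemma mvE (h1 : u ≠ x) (h2 : u ≠ y) : ({v, x, y} : Set V) = insert v ({x, y, u} \ {u}) := by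
  ext w
  simp only [Set.mem_insert_iff, Set.mem_singleton_iff, Set.mem_diff]
  aesop

lemma mvF (h1 : u ≠ x) (h2 : u ≠ z) : ({x, z, v} : Set V) = insert v ({x, u, z} \ {u}) := by
  ext w
  simp only [Set.mem_insert_iff, Set.mem_singleton_iff, Set.mem_diff]
  aesop

lemma mvG (h1 : u ≠ x) (h2 : u ≠ y) : ({x, v, y} : Set V) = insert v ({x, y, u} \ {u}) := by
  ext w
  simp only [Set.mem_insert_iff, Set.mem_singleton_iff, Set.mem_diff]
  aesop

end MV





section Join
variable {α β : Type*} {G : SimpleGraph α} {H : SimpleGraph β}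

lemma isGPSet_of_gpcond [Nonempty α] [Nonempty β] {S : Set (α ⊕ β)}
    (h : GPCond (joinGraph G H) S) : IsGPSet (joinGraph G H) S := by
  intro u hu v hv p hp hlen w hwsup hwS
  by_cases huv : u = v
  · subst huv
    have h0 : p.length = 0 := by rw [hlen, dist_self]
    rw [Walk.eq_nil_iff_nil.mpr (Walk.length_eq_zero_iff.mp h0)] at hwsup
    simp at hwsup
    exact Or.inl hwsup
  by_cases hadj : (joinGraph G H).Adj u v
  · have h1 : p.length = 1 := by rw [hlen, dist_eq_one_iff_adj.mpr hadj]
    obtain ⟨h1', rfl⟩ := walk_len1 p h1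
    simp [Walk.support_cons] at hwsup
    rcases hwsup with rfl | rfl
    · exact Or.inl rfl
    · exact Or.inr rfl
  · have hd2 : (joinGraph G H).dist u v = 2 := by
      rcases u with a | c <;> rcases v with b | d
      · exact dist_two_of_mid huv hadj (m := Sum.inr (Classical.arbitrary β))
          join_adj_lr join_adj_rl
      · exact absurd join_adj_lr hadj
      · exact absurd join_adj_rl hadj
      · exact dist_two_of_mid huv hadj (m := Sum.inl (Classical.arbitrary α))
          join_adj_rl join_adj_lr
    obtain ⟨m, h1, h2, rfl⟩ := walk_len2 p (by rw [hlen, hd2])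
    simp [Walk.support_cons] at hwsup
    rcases hwsup with rfl | rfl | rfl
    · exact Or.inl rfl
    · exact (h u hu v hv huv hadj w hwS h1 h2).elim
    · exact Or.inr rfl

lemma gpcond_clique {V : Type*} {J : SimpleGraph V} {S : Set V}
    (h : S.Pairwise J.Adj) : GPCond J S :=
  fun _ hu _ hv hne hnadj _ _ _ _ => hnadj (h hu hv hne)

lemma gp_AAB [Nonempty α] [Nonempty β] {a b : α} {m : β} (hab : G.Adj a b) :
    IsGPSet (joinGraph G H) {Sum.inl a, Sum.inl b, Sum.inr m} := by
  apply isGPSet_of_gpcond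
  apply gpcond_clique
  have hba := hab.symm
  intro u hu v hv hne
  simp only [Set.mem_insert_iff, Set.mem_singleton_iff] at hu hv
  rcases hu with rfl | rfl | rfl <;> rcases hv with rfl | rfl | rfl <;>
    simp_all [join_adj_ll, join_adj_lr, join_adj_rl]

lemma gp_ABB [Nonempty α] [Nonempty β] {s : α} {c d : β} (hcd : H.Adj c d) :
    IsGPSet (joinGraph G H) {Sum.inl s, Sum.inr c, Sum.inr d} := by
  apply isGPSet_of_gpcond
  apply gpcond_clique
  have hdc := hcd.symm
  intro u hu v hv hne
  simp only [Set.mem_insert_iff, Set.mem_singleton_iff] at hu hv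
  rcases hu with rfl | rfl | rfl <;> rcases hv with rfl | rfl | rfl <;>
    simp_all [join_adj_rr, join_adj_lr, join_adj_rl]

lemma gp_AAA [Nonempty α] [Nonempty β] {a b x : α} (hab : G.Adj a b)
    (hax : ¬G.Adj a x) (hbx : ¬G.Adj b x) (hxa : x ≠ a) (hxb : x ≠ b) :
    IsGPSet (joinGraph G H) {Sum.inl a, Sum.inl b, Sum.inl x} := by
  apply isGPSet_of_gpcond
  have hba := hab.symm
  have hxa' : ¬G.Adj x a := fun h => hax h.symm
  have hxb' : ¬G.Adj x b := fun h => hbx h.symm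
  intro u hu v hv hne hnadj w hw h1 h2
  simp only [Set.mem_insert_iff, Set.mem_singleton_iff] at hu hv hw
  rcases hu with rfl | rfl | rfl <;> rcases hv with rfl | rfl | rfl <;>
    rcases hw with rfl | rfl | rfl <;>
    simp_all [join_adj_ll, SimpleGraph.irrefl]

lemma gp_BBB [Nonempty α] [Nonempty β] {c d y : β} (hcd : H.Adj c d)
    (hcy : ¬H.Adj c y) (hdy : ¬H.Adj d y) (hyc : y ≠ c) (hyd : y ≠ d) :
    IsGPSet (joinGraph G H) {Sum.inr c, Sum.inr d, Sum.inr y} := by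
  apply isGPSet_of_gpcond
  have hdc := hcd.symm
  have hyc' : ¬H.Adj y c := fun h => hcy h.symm
  have hyd' : ¬H.Adj y d := fun h => hdy h.symm
  intro u hu v hv hne hnadj w hw h1 h2
  simp only [Set.mem_insert_iff, Set.mem_singleton_iff] at hu hv hw
  rcases hu with rfl | rfl | rfl <;> rcases hv with rfl | rfl | rfl <;>
    rcases hw with rfl | rfl | rfl <;>
    simp_all [join_adj_rr, SimpleGraph.irrefl]

end Join

section CliqueFacts
variable {α : Type*} {G : SimpleGraph α}

lemma no_triangle [Finite α] (hG : G.cliqueNum = 2) {a b c : α}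
    (hab : G.Adj a b) (hac : G.Adj a c) (hbc : G.Adj b c) : False := by
  haveI := Fintype.ofFinite α
  haveI := Classical.decEq α
  have h3 : G.IsNClique 3 {a, b, c} := is3Clique_triple_iff.mpr ⟨hab, hac, hbc⟩
  have hle : ({a, b, c} : Finset α).card ≤ G.cliqueNum :=
    IsClique.card_le_cliqueNum (tc := h3.isClique)
  rw [h3.card_eq, hG] at hle
  omega

lemma exists_edge [Finite α] (hG : G.cliqueNum = 2) : ∃ a b, G.Adj a b := by
  haveI := Fintype.ofFinite α
  haveI := Classical.decEq α
  obtain ⟨s, hs⟩ := G.exists_isNClique_cliqueNum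
  rw [hG] at hs
  obtain ⟨a, b, hne, hseq⟩ := Finset.card_eq_two.mp hs.card_eq
  rw [hseq] at hs
  exact ⟨a, b, hs.isClique (by simp) (by simp) hne⟩

lemma clique_ncard_le [Finite α] (hG : G.cliqueNum = 2) {A : Set α}
    (hA : G.IsClique A) : A.ncard ≤ 2 := by
  haveI := Fintype.ofFinite α
  haveI := Classical.decEq α
  haveI := Fintype.ofFinite (A : Set α)
  have h : A.toFinset.card ≤ G.cliqueNum :=
    IsClique.card_le_cliqueNum (tc := by rwa [Set.coe_toFinset])
  rw [hG] at h
  have h2 := Set.ncard_eq_toFinset_card' A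
  omega

end CliqueFacts







section Upper
variable {α β : Type*} {G : SimpleGraph α} {H : SimpleGraph β}

lemma left_clique {S : Set (α ⊕ β)} (hc : GPCond (joinGraph G H) S)
    (hr : ∃ c, Sum.inr c ∈ S) : G.IsClique {a | Sum.inl a ∈ S} := by
  obtain ⟨c, hcS⟩ := hr
  intro a ha b hb hne
  by_contra hnadj
  exact hc (Sum.inl a) ha (Sum.inl b) hb (by simp [hne])
    (fun h => hnadj (join_adj_ll.mp h)) (Sum.inr c) hcS join_adj_lr join_adj_rl

lemma right_clique {S : Set (α ⊕ β)} (hc : GPCond (joinGraph G H) S)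
    (hl : ∃ a, Sum.inl a ∈ S) : H.IsClique {c | Sum.inr c ∈ S} := by
  obtain ⟨a, haS⟩ := hl
  intro c hcm d hd hne
  by_contra hnadj
  exact hc (Sum.inr c) hcm (Sum.inr d) hd (by simp [hne])
    (fun h => hnadj (join_adj_rr.mp h)) (Sum.inl a) haS join_adj_rl join_adj_lr

lemma sides_decomp (S : Set (α ⊕ β)) :
    S = Sum.inl '' {a | Sum.inl a ∈ S} ∪ Sum.inr '' {c | Sum.inr c ∈ S} := by
  ext x
  rcases x with a | c <;> simp

lemma ncard_sides [Finite α] [Finite β] (S : Set (α ⊕ β)) :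
    S.ncard = {a | Sum.inl a ∈ S}.ncard + {c | Sum.inr c ∈ S}.ncard := by
  conv_lhs => rw [sides_decomp S]
  rw [Set.ncard_union_eq (by
      rw [Set.disjoint_left]
      rintro x ⟨a, _, rfl⟩ ⟨c, _, h⟩
      simp at h),
    Set.ncard_image_of_injective _ Sum.inl_injective,
    Set.ncard_image_of_injective _ Sum.inr_injective]

lemma mixed_struct [Finite α] [Finite β] (hG : G.cliqueNum = 2) (hH : H.cliqueNum = 2)
    {S : Set (α ⊕ β)} (hc : GPCond (joinGraph G H) S)
    (hl : ∃ a, Sum.inl a ∈ S) (hr : ∃ c, Sum.inr c ∈ S) (h4 : 4 ≤ S.ncard) :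
    ∃ a b c d, a ≠ b ∧ c ≠ d ∧ G.Adj a b ∧ H.Adj c d ∧
      S = {Sum.inl a, Sum.inl b, Sum.inr c, Sum.inr d} := by
  have hA := clique_ncard_le hG (left_clique hc hr)
  have hB := clique_ncard_le hH (right_clique hc hl)
  have hsum := ncard_sides S
  have hA2 : {a | Sum.inl a ∈ S}.ncard = 2 := by omega
  have hB2 : {c | Sum.inr c ∈ S}.ncard = 2 := by omega
  obtain ⟨a, b, hab, hAeq⟩ := Set.ncard_eq_two.mp hA2
  obtain ⟨c, d, hcd, hBeq⟩ := Set.ncard_eq_two.mp hB2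
  refine ⟨a, b, c, d, hab, hcd, ?_, ?_, ?_⟩
  · exact left_clique hc hr (by rw [hAeq]; simp : a ∈ {a | Sum.inl a ∈ S})
      (by rw [hAeq]; simp : b ∈ {a | Sum.inl a ∈ S}) hab
  · exact right_clique hc hl (by rw [hBeq]; simp : c ∈ {c | Sum.inr c ∈ S})
      (by rw [hBeq]; simp : d ∈ {c | Sum.inr c ∈ S}) hcd
  · conv_lhs => rw [sides_decomp S, hAeq, hBeq]
    ext x
    rcases x with e | e <;> simp [or_assoc]

end Upper

lemma mobile_ncard_le_three [Finite α] [Finite β]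
    (hG : G.cliqueNum = 2) (hH : H.cliqueNum = 2) (hnot : ¬(G = ⊤ ∧ H = ⊤))
    {S : Set (α ⊕ β)} (hS : IsMobileGPSet (joinGraph G H) S) : S.ncard ≤ 3 := by
  by_contra hcon
  push_neg at hcon
  have h4 : 4 ≤ S.ncard := hcon
  obtain ⟨hgp, k, f, hf0, hmove, hcover⟩ := hS
  have hgpi : ∀ i ≤ k, GPCond (joinGraph G H) (f i) := by
    intro i _
    rcases Nat.eq_zero_or_pos i with rfl | hpos
    · rw [hf0]; exact gpcond_of_isGPSet hgp
    · obtain ⟨j, rfl⟩ : ∃ j, i = j + 1 := ⟨i - 1, by omega⟩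
      by_cases hjk : j < k
      · obtain ⟨_, u, hu, v, hv, hadj, hT, hTgp⟩ := hmove j hjk
        exact gpcond_of_isGPSet hTgp
      · omega
  have hcard : ∀ i ≤ k, (f i).ncard = S.ncard := by
    intro i hi
    induction i with
    | zero => rw [hf0]
    | succ j ih =>
      obtain ⟨_, u, hu, v, hv, hadj, hT, _⟩ := hmove j (by omega)
      have hdj : (f j \ {u}).ncard = (f j).ncard - 1 := Set.ncard_diff_singleton_of_mem hu
      have hvd : v ∉ f j \ {u} := fun h => hv h.1
      have hpos : 0 < (f j).ncard := (Set.ncard_pos (Set.toFinite _)).mpr ⟨u, hu⟩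
      rw [hT, Set.ncard_insert_of_notMem hvd, hdj]
      have := ih (by omega)
      omega
  have hstep : ∀ i < k, (∃ a, Sum.inl a ∈ f i) → (∃ c, Sum.inr c ∈ f i) → False := by
    intro i hik hl hr
    obtain ⟨a, b, c, d, hab', hcd', hab, hcd, hfi⟩ :=
      mixed_struct hG hH (hgpi i hik.le) hl hr (by rw [hcard i hik.le]; exact h4)
    obtain ⟨_, u, hu, v, hv, hadj, hT, hTgp⟩ := hmove i hik
    have hTc : GPCond (joinGraph G H) (f (i+1)) := gpcond_of_isGPSet hTgp
    have hsub : f i \ {u} ⊆ f (i + 1) := by rw [hT]; exact Set.subset_insert _ _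
    have hrw : ∃ e, Sum.inr e ∈ f (i + 1) := by
      by_cases huc : u = Sum.inr c
      · refine ⟨d, hsub ⟨by rw [hfi]; simp, ?_⟩⟩
        rw [huc]; simp; exact fun h => hcd' h.symm
      · refine ⟨c, hsub ⟨by rw [hfi]; simp, by simpa using fun h => huc h.symm⟩⟩
    have hlw : ∃ e, Sum.inl e ∈ f (i + 1) := by
      by_cases hua : u = Sum.inl a
      · refine ⟨b, hsub ⟨by rw [hfi]; simp, ?_⟩⟩
        rw [hua]; simp; exact fun h => hab' h.symm
      · refine ⟨a, hsub ⟨by rw [hfi]; simp, by simpa using fun h => hua h.symm⟩⟩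
    have hvnew : v ∈ f (i + 1) := by rw [hT]; exact Set.mem_insert _ _
    have humem := hu
    rw [hfi] at humem
    simp only [Set.mem_insert_iff, Set.mem_singleton_iff] at humem
    rcases v with a' | c'
    · have hcliq := left_clique hTc hrw
      have ha'a : a' ≠ a := by rintro rfl; exact hv (by rw [hfi]; simp)
      have ha'b : a' ≠ b := by rintro rfl; exact hv (by rw [hfi]; simp)
      rcases humem with rfl | rfl | rfl | rfl
      · have hbmem : Sum.inl b ∈ f (i+1) :=
          hsub ⟨by rw [hfi]; simp, by simp; exact fun h => hab' h.symm⟩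
        exact no_triangle hG hab (join_adj_ll.mp hadj)
          (hcliq (show b ∈ _ from hbmem) (show a' ∈ _ from hvnew) (Ne.symm ha'b))
      · have hamem : Sum.inl a ∈ f (i+1) :=
          hsub ⟨by rw [hfi]; simp, by simp; exact hab'⟩
        exact no_triangle hG hab.symm (join_adj_ll.mp hadj)
          (hcliq (show a ∈ _ from hamem) (show a' ∈ _ from hvnew) (Ne.symm ha'a))
      · have hamem : Sum.inl a ∈ f (i+1) := hsub ⟨by rw [hfi]; simp, by simp⟩
        have hbmem : Sum.inl b ∈ f (i+1) := hsub ⟨by rw [hfi]; simp, by simp⟩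
        exact no_triangle hG hab
          (hcliq (show a ∈ _ from hamem) (show a' ∈ _ from hvnew) (Ne.symm ha'a))
          (hcliq (show b ∈ _ from hbmem) (show a' ∈ _ from hvnew) (Ne.symm ha'b))
      · have hamem : Sum.inl a ∈ f (i+1) := hsub ⟨by rw [hfi]; simp, by simp⟩
        have hbmem : Sum.inl b ∈ f (i+1) := hsub ⟨by rw [hfi]; simp, by simp⟩
        exact no_triangle hG hab
          (hcliq (show a ∈ _ from hamem) (show a' ∈ _ from hvnew) (Ne.symm ha'a))
          (hcliq (show b ∈ _ from hbmem) (show a' ∈ _ from hvnew) (Ne.symm ha'b))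
    · have hcliq := right_clique hTc hlw
      have hc'c : c' ≠ c := by rintro rfl; exact hv (by rw [hfi]; simp)
      have hc'd : c' ≠ d := by rintro rfl; exact hv (by rw [hfi]; simp)
      rcases humem with rfl | rfl | rfl | rfl
      · have hcmem : Sum.inr c ∈ f (i+1) := hsub ⟨by rw [hfi]; simp, by simp⟩
        have hdmem : Sum.inr d ∈ f (i+1) := hsub ⟨by rw [hfi]; simp, by simp⟩
        exact no_triangle hH hcd
          (hcliq (show c ∈ _ from hcmem) (show c' ∈ _ from hvnew) (Ne.symm hc'c))
          (hcliq (show d ∈ _ from hdmem) (show c' ∈ _ from hvnew) (Ne.symm hc'd))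
      · have hcmem : Sum.inr c ∈ f (i+1) := hsub ⟨by rw [hfi]; simp, by simp⟩
        have hdmem : Sum.inr d ∈ f (i+1) := hsub ⟨by rw [hfi]; simp, by simp⟩
        exact no_triangle hH hcd
          (hcliq (show c ∈ _ from hcmem) (show c' ∈ _ from hvnew) (Ne.symm hc'c))
          (hcliq (show d ∈ _ from hdmem) (show c' ∈ _ from hvnew) (Ne.symm hc'd))
      · have hdmem : Sum.inr d ∈ f (i+1) :=
          hsub ⟨by rw [hfi]; simp, by simp; exact fun h => hcd' h.symm⟩
        exact no_triangle hH hcd (join_adj_rr.mp hadj)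
          (hcliq (show d ∈ _ from hdmem) (show c' ∈ _ from hvnew) (Ne.symm hc'd))
      · have hcmem : Sum.inr c ∈ f (i+1) :=
          hsub ⟨by rw [hfi]; simp, by simp; exact hcd'⟩
        exact no_triangle hH hcd.symm (join_adj_rr.mp hadj)
          (hcliq (show c ∈ _ from hcmem) (show c' ∈ _ from hvnew) (Ne.symm hc'c))
  have hnomix : ∀ i ≤ k, ¬((∃ a, Sum.inl a ∈ f i) ∧ (∃ c, Sum.inr c ∈ f i)) := by
    rintro i hik ⟨hl, hr⟩
    rcases lt_or_eq_of_le hik with hlt | rfl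
    · exact hstep i hlt hl hr
    · rcases Nat.eq_zero_or_pos i with rfl | hpos
      · have huniv : f 0 = Set.univ := by simpa using hcover
        obtain ⟨a, b, c, d, hab', hcd', hab, hcd, hfi⟩ :=
          mixed_struct hG hH (hgpi 0 le_rfl) hl hr (by rw [hcard 0 le_rfl]; exact h4)
        apply hnot
        constructor
        · ext x y
          simp only [top_adj]
          constructor
          · exact Adj.ne
          · intro hxy
            have hx : Sum.inl x ∈ f 0 := by rw [huniv]; trivial
            have hy : Sum.inl y ∈ f 0 := by rw [huniv]; trivial
            rw [hfi] at hx hy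
            simp only [Set.mem_insert_iff, Set.mem_singleton_iff, Sum.inl.injEq,
              reduceCtorEq, or_false] at hx hy
            rcases hx with rfl | rfl <;> rcases hy with rfl | rfl
            · exact absurd rfl hxy
            · exact hab
            · exact hab.symm
            · exact absurd rfl hxy
        · ext x y
          simp only [top_adj]
          constructor
          · exact Adj.ne
          · intro hxy
            have hx : Sum.inr x ∈ f 0 := by rw [huniv]; trivial
            have hy : Sum.inr y ∈ f 0 := by rw [huniv]; trivial
            rw [hfi] at hx hy
            simp only [Set.mem_insert_iff, Set.mem_singleton_iff, Sum.inr.injEq,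
              reduceCtorEq, false_or] at hx hy
            rcases hx with rfl | rfl <;> rcases hy with rfl | rfl
            · exact absurd rfl hxy
            · exact hcd
            · exact hcd.symm
            · exact absurd rfl hxy
      · obtain ⟨j, rfl⟩ : ∃ j, i = j + 1 := ⟨i - 1, by omega⟩
        obtain ⟨_, u, hu, v, hv, hadj, hT, hTgp⟩ := hmove j (by omega)
        have hTc : GPCond (joinGraph G H) (f (j+1)) := gpcond_of_isGPSet hTgp
        have hsub : f j \ {u} ⊆ f (j + 1) := by rw [hT]; exact Set.subset_insert _ _
        have hmonoj : (∀ x ∈ f j, ∃ a, x = Sum.inl a) ∨ (∀ x ∈ f j, ∃ c, x = Sum.inr c) := by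
          by_cases hL : ∃ c, Sum.inr c ∈ f j
          · right
            intro x hx
            rcases x with a | c
            · exact absurd hL (fun h2 => hstep j (by omega) ⟨a, hx⟩ h2)
            · exact ⟨c, rfl⟩
          · left
            intro x hx
            rcases x with a | c
            · exact ⟨a, rfl⟩
            · exact absurd ⟨c, hx⟩ hL
        have hfj4 : 4 ≤ (f j).ncard := by rw [hcard j (by omega)]; exact h4
        rcases hmonoj with hmj | hmj
        · obtain ⟨u0, rfl⟩ := hmj u hu
          have hBj : {c | Sum.inr c ∈ f j}.ncard = 0 := by
            have hempty : {c | Sum.inr c ∈ f j} = ∅ := by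
              ext c
              simp only [Set.mem_setOf_eq, Set.mem_empty_iff_false, iff_false]
              intro hcj
              obtain ⟨a, ha⟩ := hmj _ hcj
              simp at ha
            simp [hempty]
          have hAj : 4 ≤ {x | Sum.inl x ∈ f j}.ncard := by
            have := ncard_sides (f j)
            omega
          have hu0 : u0 ∈ {x | Sum.inl x ∈ f j} := hu
          have hsub2 : {x | Sum.inl x ∈ f j} \ {u0} ⊆ {x | Sum.inl x ∈ f (j+1)} := by
            rintro x ⟨hx1, hx2⟩
            exact hsub ⟨hx1, by simpa using hx2⟩
          have h1 := Set.ncard_le_ncard hsub2 (Set.toFinite _)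
          have h2 : ({x | Sum.inl x ∈ f j} \ {u0}).ncard = {x | Sum.inl x ∈ f j}.ncard - 1 :=
            Set.ncard_diff_singleton_of_mem hu0
          have hcl := clique_ncard_le hG (left_clique hTc hr)
          omega
        · obtain ⟨u0, rfl⟩ := hmj u hu
          have hAj : {a | Sum.inl a ∈ f j}.ncard = 0 := by
            have hempty : {a | Sum.inl a ∈ f j} = ∅ := by
              ext a
              simp only [Set.mem_setOf_eq, Set.mem_empty_iff_false, iff_false]
              intro haj
              obtain ⟨c, hc⟩ := hmj _ haj
              simp at hc
            simp [hempty]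
          have hBj : 4 ≤ {c | Sum.inr c ∈ f j}.ncard := by
            have := ncard_sides (f j)
            omega
          have hu0 : u0 ∈ {c | Sum.inr c ∈ f j} := hu
          have hsub2 : {c | Sum.inr c ∈ f j} \ {u0} ⊆ {c | Sum.inr c ∈ f (j+1)} := by
            rintro x ⟨hx1, hx2⟩
            exact hsub ⟨hx1, by simpa using hx2⟩
          have h1 := Set.ncard_le_ncard hsub2 (Set.toFinite _)
          have h2 : ({c | Sum.inr c ∈ f j} \ {u0}).ncard = {c | Sum.inr c ∈ f j}.ncard - 1 :=
            Set.ncard_diff_singleton_of_mem hu0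
          have hcl := clique_ncard_le hH (right_clique hTc hl)
          omega
  obtain ⟨a0, b0, hGedge⟩ := exists_edge hG
  obtain ⟨c0, d0, hHedge⟩ := exists_edge hH
  have hmem_exists : ∀ (x : α ⊕ β), ∃ i ≤ k, x ∈ f i := by
    intro x
    have : x ∈ ⋃ i ∈ Set.Iic k, f i := by rw [hcover]; trivial
    simpa using this
  have hmono : ∀ i ≤ k, (∀ x ∈ f i, ∃ a, x = Sum.inl a) ∨ (∀ x ∈ f i, ∃ c, x = Sum.inr c) := by
    intro i hik
    by_cases hL : ∃ c, Sum.inr c ∈ f i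
    · right
      intro x hx
      rcases x with a | c
      · exact absurd hL (fun h2 => hnomix i hik ⟨⟨a, hx⟩, h2⟩)
      · exact ⟨c, rfl⟩
    · left
      intro x hx
      rcases x with a | c
      · exact ⟨a, rfl⟩
      · exact absurd ⟨c, hx⟩ hL
  have hshare : ∀ i < k, ∃ x, x ∈ f i ∧ x ∈ f (i+1) := by
    intro i hik
    obtain ⟨_, u, hu, v, hv, hadj, hT, _⟩ := hmove i hik
    have hne : (f i \ {u}).Nonempty := by
      apply Set.nonempty_of_ncard_ne_zero
      have h1 : (f i \ {u}).ncard = (f i).ncard - 1 := Set.ncard_diff_singleton_of_mem hu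
      have h2 := hcard i hik.le
      omega
    obtain ⟨x, hx⟩ := hne
    exact ⟨x, hx.1, by rw [hT]; exact Set.mem_insert_of_mem _ hx⟩
  rcases hmono 0 (Nat.zero_le k) with h0 | h0
  · have hall : ∀ i ≤ k, ∀ x ∈ f i, ∃ a, x = Sum.inl a := by
      intro i
      induction i with
      | zero => exact fun _ => h0
      | succ j ih =>
        intro hjk
        obtain ⟨x, hx1, hx2⟩ := hshare j (by omega)
        obtain ⟨a, rfl⟩ := ih (by omega) x hx1
        rcases hmono (j+1) hjk with h | h
        · exact h
        · obtain ⟨c, hc⟩ := h _ hx2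
          simp at hc
    obtain ⟨i, hik, hmemi⟩ := hmem_exists (Sum.inr c0)
    obtain ⟨a, ha⟩ := hall i hik _ hmemi
    simp at ha
  · have hall : ∀ i ≤ k, ∀ x ∈ f i, ∃ c, x = Sum.inr c := by
      intro i
      induction i with
      | zero => exact fun _ => h0
      | succ j ih =>
        intro hjk
        obtain ⟨x, hx1, hx2⟩ := hshare j (by omega)
        obtain ⟨c, rfl⟩ := ih (by omega) x hx1
        rcases hmono (j+1) hjk with h | h
        · obtain ⟨a, ha⟩ := h _ hx2
          simp at ha
        · exact h
    obtain ⟨i, hik, hmemi⟩ := hmem_exists (Sum.inl a0)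
    obtain ⟨c, hc⟩ := hall i hik _ hmemi
    simp at hc




section Lists

lemma legal_mk {V : Type*} {J : SimpleGraph V} {S T : Set V} (hgpS : IsGPSet J S) (u v : V)
    (hu : u ∈ S) (hv : v ∉ S) (hadj : J.Adj u v) (hT : T = insert v (S \ {u}))
    (hgpT : IsGPSet J T) : LegalMove J S T :=
  ⟨hgpS, u, hu, v, hv, hadj, hT, hgpT⟩

lemma getLast?_cons_of_ne_nil {C : Type*} {l : List C} (h : l ≠ []) (a : C) :
    (a :: l).getLast? = l.getLast? := by
  cases l with
  | nil => exact absurd rfl h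
  | cons x l' => rw [List.getLast?_cons_cons]

lemma mobile_of_list {V : Type*} {J : SimpleGraph V} {S : Set V} {L : List (Set V)}
    (hne : L ≠ []) (hchain : L.Chain' (LegalMove J)) (hhead : L.head hne = S)
    (hgp : IsGPSet J S) (hcover : ∀ x, ∃ T ∈ L, x ∈ T) : IsMobileGPSet J S := by
  have hlen : 0 < L.length := List.length_pos_iff.mpr hne
  refine ⟨hgp, L.length - 1, fun i => L.getD i ∅, ?_, ?_, ?_⟩
  · show L.getD 0 ∅ = S
    rw [List.getD_eq_getElem _ _ hlen]
    rw [← hhead]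
    cases L with
    | nil => exact absurd rfl hne
    | cons a l => simp
  · intro i hi
    have h1 : i < L.length := by omega
    have h2 : i + 1 < L.length := by omega
    show LegalMove J (L.getD i ∅) (L.getD (i+1) ∅)
    rw [List.getD_eq_getElem _ _ h1, List.getD_eq_getElem _ _ h2]
    have := List.isChain_iff_getElem.mp hchain i (by omega)
    simpa using this
  · ext x
    simp only [Set.mem_iUnion, Set.mem_univ, iff_true, Set.mem_Iic]
    obtain ⟨T, hTL, hxT⟩ := hcover x
    obtain ⟨j, hj, hTj⟩ := List.mem_iff_getElem.mp hTL
    exact ⟨j, by omega, by show x ∈ L.getD j ∅; rw [List.getD_eq_getElem _ _ hj, hTj]; exact hxT⟩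

lemma chain_glue {C : Type*} {R : C → C → Prop} {Home : C} :
    ∀ ps : List (List C),
      (∀ p ∈ ps, p = [] ∨ (p.getLast? = some Home ∧ (Home :: p).Chain' R)) →
      (Home :: ps.flatten).Chain' R ∧ (Home :: ps.flatten).getLast? = some Home := by
  intro ps
  induction ps with
  | nil => intro _; simp; exact List.isChain_singleton _
  | cons p ps ih =>
    intro h
    obtain ⟨ihc, ihl⟩ := ih (fun q hq => h q (List.mem_cons_of_mem _ hq))
    obtain hp | ⟨hlast, hchain⟩ := h p List.mem_cons_self
    · subst hp
      simpa using ⟨ihc, ihl⟩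
    · have hpne : p ≠ [] := fun hc => by simp [hc] at hlast
      have hjoin : (p :: ps).flatten = p ++ ps.flatten := rfl
      constructor
      · rw [hjoin, ← List.cons_append]
        apply List.IsChain.append hchain ((List.isChain_cons.mp ihc).2)
        intro x hx y hy
        have hxh : x = Home := by
          rw [getLast?_cons_of_ne_nil hpne, hlast] at hx
          exact (by simpa using hx : Home = x).symm
        subst hxh
        exact (List.isChain_cons.mp ihc).1 y hy
      · rw [hjoin, ← List.cons_append]
        by_cases hpj : ps.flatten = []
        · rw [hpj, List.append_nil, getLast?_cons_of_ne_nil hpne]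
          exact hlast
        · rw [List.getLast?_append_of_ne_nil _ hpj]
          rwa [getLast?_cons_of_ne_nil hpj] at ihl

end Lists







section Construct
variable {α β : Type*} {G : SimpleGraph α} {H : SimpleGraph β}

lemma exists_mobile_three [Finite α] [Finite β] {a b : α} {c d : β}
    (hab : G.Adj a b) (hcd : H.Adj c d) :
    ∃ S : Set (α ⊕ β), IsMobileGPSet (joinGraph G H) S ∧ S.ncard = 3 := by
  haveI : Nonempty α := ⟨a⟩
  haveI : Nonempty β := ⟨c⟩
  classical
  have hba : b ≠ a := hab.ne'
  have hanb : a ≠ b := hab.ne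
  have hdc : d ≠ c := hcd.ne'
  have hcnd : c ≠ d := hcd.ne
  have hgpHome : IsGPSet (joinGraph G H) {Sum.inl a, Sum.inl b, Sum.inr c} := gp_AAB hab
  have hgpABD : IsGPSet (joinGraph G H) {Sum.inl a, Sum.inl b, Sum.inr d} := gp_AAB hab
  have hgpBCD : IsGPSet (joinGraph G H) {Sum.inl b, Sum.inr c, Sum.inr d} := gp_ABB hcd
  have hgpACD : IsGPSet (joinGraph G H) {Sum.inl a, Sum.inr c, Sum.inr d} := gp_ABB hcd
  have hβ : ∀ y : β, ∃ p : List (Set (α ⊕ β)),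
      (p = [] ∨ (p.getLast? = some {Sum.inl a, Sum.inl b, Sum.inr c} ∧
        (({Sum.inl a, Sum.inl b, Sum.inr c} : Set (α ⊕ β)) :: p).Chain'
          (LegalMove (joinGraph G H)))) ∧
      ∃ T ∈ (({Sum.inl a, Sum.inl b, Sum.inr c} : Set (α ⊕ β)) :: p), Sum.inr y ∈ T := by
    intro y
    by_cases hyc : y = c
    · exact ⟨[], Or.inl rfl, {Sum.inl a, Sum.inl b, Sum.inr c}, by simp, by simp [hyc]⟩
    by_cases hyd : y = d
    · subst hyd
      refine ⟨[{Sum.inl a, Sum.inl b, Sum.inr y}, {Sum.inl a, Sum.inl b, Sum.inr c}],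
        Or.inr ⟨by rfl, ?_⟩, {Sum.inl a, Sum.inl b, Sum.inr y}, by simp, by simp⟩
      refine List.isChain_cons_cons.mpr ⟨?_, List.isChain_cons_cons.mpr ⟨?_, List.isChain_singleton _⟩⟩
      · exact legal_mk hgpHome (Sum.inr c) (Sum.inr y) (by simp) (by simp [hdc])
          (join_adj_rr.mpr hcd) (mvA (by simp) (by simp)) hgpABD
      · exact legal_mk hgpABD (Sum.inr y) (Sum.inr c) (by simp) (by simp [hcnd])
          (join_adj_rr.mpr hcd.symm) (mvA (by simp) (by simp)) hgpHome
    by_cases h1 : H.Adj c y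
    · have hgpABY : IsGPSet (joinGraph G H) {Sum.inl a, Sum.inl b, Sum.inr y} := gp_AAB hab
      refine ⟨[{Sum.inl a, Sum.inl b, Sum.inr y}, {Sum.inl a, Sum.inl b, Sum.inr c}],
        Or.inr ⟨by rfl, ?_⟩, {Sum.inl a, Sum.inl b, Sum.inr y}, by simp, by simp⟩
      refine List.isChain_cons_cons.mpr ⟨?_, List.isChain_cons_cons.mpr ⟨?_, List.isChain_singleton _⟩⟩
      · exact legal_mk hgpHome (Sum.inr c) (Sum.inr y) (by simp) (by simp [hyc])
          (join_adj_rr.mpr h1) (mvA (by simp) (by simp)) hgpABY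
      · exact legal_mk hgpABY (Sum.inr y) (Sum.inr c) (by simp)
          (by simp [Ne.symm hyc]) (join_adj_rr.mpr h1.symm)
          (mvA (by simp) (by simp)) hgpHome
    by_cases h2 : H.Adj d y
    · have hgpABY : IsGPSet (joinGraph G H) {Sum.inl a, Sum.inl b, Sum.inr y} := gp_AAB hab
      refine ⟨[{Sum.inl a, Sum.inl b, Sum.inr d}, {Sum.inl a, Sum.inl b, Sum.inr y},
          {Sum.inl a, Sum.inl b, Sum.inr d}, {Sum.inl a, Sum.inl b, Sum.inr c}],
        Or.inr ⟨by rfl, ?_⟩, {Sum.inl a, Sum.inl b, Sum.inr y}, by simp, by simp⟩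
      refine List.isChain_cons_cons.mpr ⟨?_, List.isChain_cons_cons.mpr ⟨?_, List.isChain_cons_cons.mpr
        ⟨?_, List.isChain_cons_cons.mpr ⟨?_, List.isChain_singleton _⟩⟩⟩⟩
      · exact legal_mk hgpHome (Sum.inr c) (Sum.inr d) (by simp) (by simp [hdc])
          (join_adj_rr.mpr hcd) (mvA (by simp) (by simp)) hgpABD
      · exact legal_mk hgpABD (Sum.inr d) (Sum.inr y) (by simp) (by simp [hyd])
          (join_adj_rr.mpr h2) (mvA (by simp) (by simp)) hgpABY
      · exact legal_mk hgpABY (Sum.inr y) (Sum.inr d) (by simp)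
          (by simp [Ne.symm hyd]) (join_adj_rr.mpr h2.symm)
          (mvA (by simp) (by simp)) hgpABD
      · exact legal_mk hgpABD (Sum.inr d) (Sum.inr c) (by simp) (by simp [hcnd])
          (join_adj_rr.mpr hcd.symm) (mvA (by simp) (by simp)) hgpHome
    · have hgpCDY : IsGPSet (joinGraph G H) {Sum.inr c, Sum.inr d, Sum.inr y} :=
        gp_BBB hcd h1 h2 hyc hyd
      refine ⟨[{Sum.inl b, Sum.inr c, Sum.inr d}, {Sum.inr c, Sum.inr d, Sum.inr y},
          {Sum.inl b, Sum.inr c, Sum.inr d}, {Sum.inl a, Sum.inl b, Sum.inr c}],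
        Or.inr ⟨by rfl, ?_⟩, {Sum.inr c, Sum.inr d, Sum.inr y}, by simp, by simp⟩
      refine List.isChain_cons_cons.mpr ⟨?_, List.isChain_cons_cons.mpr ⟨?_, List.isChain_cons_cons.mpr
        ⟨?_, List.isChain_cons_cons.mpr ⟨?_, List.isChain_singleton _⟩⟩⟩⟩
      · exact legal_mk hgpHome (Sum.inl a) (Sum.inr d) (by simp) (by simp [hdc])
          join_adj_lr (mvC (by simp [hanb]) (by simp)) hgpBCD
      · exact legal_mk hgpBCD (Sum.inl b) (Sum.inr y) (by simp) (by simp [hyc, hyd])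
          join_adj_lr (mvC (by simp) (by simp)) hgpCDY
      · exact legal_mk hgpCDY (Sum.inr y) (Sum.inl b) (by simp) (by simp)
          join_adj_rl (mvE (by simp [hyc]) (by simp [hyd])) hgpBCD
      · exact legal_mk hgpBCD (Sum.inr d) (Sum.inl a) (by simp) (by simp [hanb])
          join_adj_rl (mvE (by simp) (by simp [hdc])) hgpHome
  have hα : ∀ x : α, ∃ p : List (Set (α ⊕ β)),
      (p = [] ∨ (p.getLast? = some {Sum.inl a, Sum.inl b, Sum.inr c} ∧
        (({Sum.inl a, Sum.inl b, Sum.inr c} : Set (α ⊕ β)) :: p).Chain'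
          (LegalMove (joinGraph G H)))) ∧
      ∃ T ∈ (({Sum.inl a, Sum.inl b, Sum.inr c} : Set (α ⊕ β)) :: p), Sum.inl x ∈ T := by
    intro x
    by_cases hxa : x = a
    · exact ⟨[], Or.inl rfl, {Sum.inl a, Sum.inl b, Sum.inr c}, by simp, by simp [hxa]⟩
    by_cases hxb : x = b
    · exact ⟨[], Or.inl rfl, {Sum.inl a, Sum.inl b, Sum.inr c}, by simp, by simp [hxb]⟩
    by_cases h1 : G.Adj a x
    · have hgpXCD : IsGPSet (joinGraph G H) {Sum.inl x, Sum.inr c, Sum.inr d} := gp_ABB hcd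
      refine ⟨[{Sum.inl a, Sum.inr c, Sum.inr d}, {Sum.inl x, Sum.inr c, Sum.inr d},
          {Sum.inl a, Sum.inr c, Sum.inr d}, {Sum.inl a, Sum.inl b, Sum.inr c}],
        Or.inr ⟨by rfl, ?_⟩, {Sum.inl x, Sum.inr c, Sum.inr d}, by simp, by simp⟩
      refine List.isChain_cons_cons.mpr ⟨?_, List.isChain_cons_cons.mpr ⟨?_, List.isChain_cons_cons.mpr
        ⟨?_, List.isChain_cons_cons.mpr ⟨?_, List.isChain_singleton _⟩⟩⟩⟩
      · exact legal_mk hgpHome (Sum.inl b) (Sum.inr d) (by simp) (by simp [hdc])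
          join_adj_lr (mvF (by simp [hba]) (by simp)) hgpACD
      · exact legal_mk hgpACD (Sum.inl a) (Sum.inl x) (by simp) (by simp [hxa])
          (join_adj_ll.mpr h1) (mvB (by simp) (by simp)) hgpXCD
      · exact legal_mk hgpXCD (Sum.inl x) (Sum.inl a) (by simp)
          (by simp [Ne.symm hxa]) (join_adj_ll.mpr h1.symm)
          (mvB (by simp) (by simp)) hgpACD
      · exact legal_mk hgpACD (Sum.inr d) (Sum.inl b) (by simp) (by simp [hba])
          join_adj_rl (mvG (by simp) (by simp [hdc])) hgpHome
    by_cases h2 : G.Adj b x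
    · have hgpXCD : IsGPSet (joinGraph G H) {Sum.inl x, Sum.inr c, Sum.inr d} := gp_ABB hcd
      refine ⟨[{Sum.inl a, Sum.inr c, Sum.inr d}, {Sum.inl b, Sum.inr c, Sum.inr d},
          {Sum.inl x, Sum.inr c, Sum.inr d}, {Sum.inl b, Sum.inr c, Sum.inr d},
          {Sum.inl a, Sum.inl b, Sum.inr c}],
        Or.inr ⟨by rfl, ?_⟩, {Sum.inl x, Sum.inr c, Sum.inr d}, by simp, by simp⟩
      refine List.isChain_cons_cons.mpr ⟨?_, List.isChain_cons_cons.mpr ⟨?_, List.isChain_cons_cons.mpr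
        ⟨?_, List.isChain_cons_cons.mpr ⟨?_, List.isChain_cons_cons.mpr
        ⟨?_, List.isChain_singleton _⟩⟩⟩⟩⟩
      · exact legal_mk hgpHome (Sum.inl b) (Sum.inr d) (by simp) (by simp [hdc])
          join_adj_lr (mvF (by simp [hba]) (by simp)) hgpACD
      · exact legal_mk hgpACD (Sum.inl a) (Sum.inl b) (by simp) (by simp [hba])
          (join_adj_ll.mpr hab) (mvB (by simp) (by simp)) hgpBCD
      · exact legal_mk hgpBCD (Sum.inl b) (Sum.inl x) (by simp) (by simp [hxb])
          (join_adj_ll.mpr h2) (mvB (by simp) (by simp)) hgpXCD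
      · exact legal_mk hgpXCD (Sum.inl x) (Sum.inl b) (by simp)
          (by simp [Ne.symm hxb]) (join_adj_ll.mpr h2.symm)
          (mvB (by simp) (by simp)) hgpBCD
      · exact legal_mk hgpBCD (Sum.inr d) (Sum.inl a) (by simp) (by simp [hanb])
          join_adj_rl (mvE (by simp) (by simp [hdc])) hgpHome
    · have hgpABX : IsGPSet (joinGraph G H) {Sum.inl a, Sum.inl b, Sum.inl x} :=
        gp_AAA hab h1 h2 hxa hxb
      refine ⟨[{Sum.inl a, Sum.inl b, Sum.inl x}, {Sum.inl a, Sum.inl b, Sum.inr c}],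
        Or.inr ⟨by rfl, ?_⟩, {Sum.inl a, Sum.inl b, Sum.inl x}, by simp, by simp⟩
      refine List.isChain_cons_cons.mpr ⟨?_, List.isChain_cons_cons.mpr ⟨?_, List.isChain_singleton _⟩⟩
      · exact legal_mk hgpHome (Sum.inr c) (Sum.inl x) (by simp) (by simp [hxa, hxb])
          join_adj_rl (mvA (by simp) (by simp)) hgpABX
      · exact legal_mk hgpABX (Sum.inl x) (Sum.inr c) (by simp) (by simp)
          join_adj_lr (mvA (by simp [hxa]) (by simp [hxb])) hgpHome
  haveI := Fintype.ofFinite α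
  haveI := Fintype.ofFinite β
  choose pβ hβ1 hβ2 using hβ
  choose pα hα1 hα2 using hα
  set pieces : List (List (Set (α ⊕ β))) :=
    ((Finset.univ : Finset β).toList.map pβ) ++ ((Finset.univ : Finset α).toList.map pα)
    with hpieces
  have hpsfact : ∀ p ∈ pieces,
      p = [] ∨ (p.getLast? = some {Sum.inl a, Sum.inl b, Sum.inr c} ∧
        (({Sum.inl a, Sum.inl b, Sum.inr c} : Set (α ⊕ β)) :: p).Chain'
          (LegalMove (joinGraph G H))) := by
    intro p hp
    rw [hpieces] at hp
    rcases List.mem_append.mp hp with hp | hp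
    · obtain ⟨y, _, rfl⟩ := List.mem_map.mp hp
      exact hβ1 y
    · obtain ⟨x, _, rfl⟩ := List.mem_map.mp hp
      exact hα1 x
  have hglue := chain_glue (R := LegalMove (joinGraph G H))
    (Home := {Sum.inl a, Sum.inl b, Sum.inr c}) pieces hpsfact
  refine ⟨{Sum.inl a, Sum.inl b, Sum.inr c},
    mobile_of_list (L := ({Sum.inl a, Sum.inl b, Sum.inr c} : Set (α ⊕ β)) :: pieces.flatten)
      (by simp) hglue.1 rfl hgpHome ?_, ?_⟩
  · intro z
    rcases z with x | y
    · obtain ⟨T, hT, hxT⟩ := hα2 x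
      rcases List.mem_cons.mp hT with rfl | hT'
      · exact ⟨_, List.mem_cons_self, hxT⟩
      · refine ⟨T, List.mem_cons_of_mem _ (List.mem_flatten.mpr ⟨pα x, ?_, hT'⟩), hxT⟩
        rw [hpieces]
        exact List.mem_append.mpr (Or.inr (List.mem_map.mpr ⟨x, by simp, rfl⟩))
    · obtain ⟨T, hT, hyT⟩ := hβ2 y
      rcases List.mem_cons.mp hT with rfl | hT'
      · exact ⟨_, List.mem_cons_self, hyT⟩
      · refine ⟨T, List.mem_cons_of_mem _ (List.mem_flatten.mpr ⟨pβ y, ?_, hT'⟩), hyT⟩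
        rw [hpieces]
        exact List.mem_append.mpr (Or.inl (List.mem_map.mpr ⟨y, by simp, rfl⟩))
  · rw [Set.ncard_eq_three]
    exact ⟨Sum.inl a, Sum.inl b, Sum.inr c, by simp [hanb], by simp, by simp, rfl⟩

end Construct

theorem mob_join_cliqueNum_two {α β : Type*} [Finite α] [Finite β]
    (G : SimpleGraph α) (H : SimpleGraph β)
    (hG : G.cliqueNum = 2) (hH : H.cliqueNum = 2)
    (hnot : ¬(G = ⊤ ∧ H = ⊤)) :
    mob (joinGraph G H) = 3 := by
  obtain ⟨a, b, hab⟩ := exists_edge hG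
  obtain ⟨c, d, hcd⟩ := exists_edge hH
  obtain ⟨S3, hS3, hS3card⟩ := exists_mobile_three hab hcd
  have hmem : 3 ∈ {n | ∃ S : Set (α ⊕ β), IsMobileGPSet (joinGraph G H) S ∧ S.ncard = n} :=
    ⟨S3, hS3, hS3card⟩
  have hub : ∀ n ∈ {n | ∃ S : Set (α ⊕ β), IsMobileGPSet (joinGraph G H) S ∧ S.ncard = n},
      n ≤ 3 := by
    rintro n ⟨S, hS, rfl⟩
    exact mobile_ncard_le_three hG hH hnot hS
  show sSup {n | ∃ S : Set (α ⊕ β), IsMobileGPSet (joinGraph G H) S ∧ S.ncard = n} = 3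
  exact le_antisymm (csSup_le ⟨3, hmem⟩ hub) (le_csSup ⟨3, hub⟩ hmem)
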